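/- Let H be a real symmetric invertible matrix with exactly one negative eigenvalue -λ₁ and positive eigenvalues λ₂,...,λ_d, let v be a unit vector with Hv-related data as follows: v·H⁻¹v = -1/μ with μ > 0. In the eigenbasis of H, writing ṽ = (v₂,...,v_d) and H̃ = diag(λ₂,...,λ_d), the (d-1)×(d-1) matrix H̃ + μ ṽ⊗ṽ is positive definite and det(H̃ + μ ṽ⊗ṽ) = μ·(v₁²/λ₁)·∏_{k=2}^d λ_k. -/

import Mathlib

open Matrix

theorem stmt_16 (d : ℕ) (lam₁ : ℝ) (hlam₁ : 0 < lam₁)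
    (lam : Fin d → ℝ) (hlam : ∀ k, 0 < lam k)
    (μ : ℝ) (hμ : 0 < μ)
    (v₁ : ℝ) (v : Fin d → ℝ)
    (hunit : v₁ ^ 2 + ∑ k, v k ^ 2 = 1)
    (hvH : -(v₁ ^ 2) / lam₁ + ∑ k, v k ^ 2 / lam k = -1 / μ) :
    (Matrix.diagonal lam + μ • vecMulVec v v).PosDef ∧
    (Matrix.diagonal lam + μ • vecMulVec v v).det =
      μ * (v₁ ^ 2 / lam₁) * ∏ k, lam k := by
  constructor
  · apply Matrix.PosDef.add_posSemidef (Matrix.PosDef.diagonal hlam)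
    apply Matrix.PosSemidef.of_dotProduct_mulVec_nonneg
    · ext i j
      simp [vecMulVec_apply, mul_comm]
    · intro x
      have : star x ⬝ᵥ (μ • vecMulVec v v) *ᵥ x = μ * (v ⬝ᵥ x) ^ 2 := by
        simp only [smul_mulVec, dotProduct_smul, smul_eq_mul]
        congr 1
        simp [vecMulVec_apply, mulVec, dotProduct, Finset.mul_sum, Finset.sum_mul, sq,
          mul_assoc, mul_comm, mul_left_comm]
      rw [this]
      positivity
  · have hdet : IsUnit (Matrix.diagonal lam).det := by
      simp only [det_diagonal]
      exact (Finset.prod_pos (fun k _ => hlam k)).ne'.isUnit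
    have hinv : (Matrix.diagonal lam)⁻¹ = Matrix.diagonal (fun k => (lam k)⁻¹) :=
      Matrix.inv_eq_right_inv (by
        rw [Matrix.diagonal_mul_diagonal]
        convert Matrix.diagonal_one
        exact mul_inv_cancel₀ (hlam _).ne')
    have hvv : (μ • vecMulVec v v : Matrix (Fin d) (Fin d) ℝ) =
        replicateCol (Fin 1) (μ • v) * replicateRow (Fin 1) v := by
      ext i j
      simp [vecMulVec_apply, Matrix.mul_apply, mul_assoc]
    rw [hvv]
    erw [det_add_replicateCol_mul_replicateRow (ι := Fin 1) hdet (μ • v) v]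
    rw [det_diagonal, hinv]
    simp only [det_unique, Matrix.add_apply, Matrix.one_apply_eq, Matrix.mul_apply, replicateRow_apply,
      replicateCol_apply, Pi.smul_apply, smul_eq_mul, Matrix.diagonal_apply, Finset.sum_ite_eq,
      Finset.mem_univ, if_true]
    have hsimp : ∀ x, (∑ x_1, v x_1 * if x_1 = x then (lam x_1)⁻¹ else 0) = v x * (lam x)⁻¹ := by
      intro x; simp
    simp only [hsimp]
    have hsum : ∑ k, v k ^ 2 / lam k = -1 / μ + v₁ ^ 2 / lam₁ := by
      rw [neg_div] at hvH; linarith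
    have key : (1 : ℝ) + ∑ x, v x * (lam x)⁻¹ * (μ * v x) = μ * (v₁ ^ 2 / lam₁) := by
      have h2 : ∑ x, v x * (lam x)⁻¹ * (μ * v x) = μ * ∑ k, v k ^ 2 / lam k := by
        rw [Finset.mul_sum]
        exact Finset.sum_congr rfl fun k _ => by rw [div_eq_mul_inv]; ring
      rw [h2, hsum]
      field_simp
      ring
    rw [key]; ring
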